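/- Let F be a finite set of N players and v : Finset F → ℝ a value function with v(∅) = 0. Then the Shapley values satisfy Pareto optimality (efficiency): ∑_{i ∈ F} φ_v(i) = v(F). -/

import Mathlib

open Finset

/-- The Shapley value of player `i` in the coalitional game `(F, v)`:
`φ_v(i) = ∑_{A ⊆ F \ {i}} (|A|! · (N − |A| − 1)! / N!) · (v(A ∪ {i}) − v(A))`. -/
noncomputable def shapleyValue {F : Type*} [Fintype F] [DecidableEq F]
    (v : Finset F → ℝ) (i : F) : ℝ :=
  ∑ A ∈ (Finset.univ.erase i).powerset,
    ((A.card.factorial * (Fintype.card F - A.card - 1).factorial : ℝ) /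
        (Fintype.card F).factorial) * (v (insert i A) - v A)

theorem shapley_efficiency
    {F : Type*} [Fintype F] [DecidableEq F] (v : Finset F → ℝ)
    (h_empty : v ∅ = 0) :
    ∑ i, shapleyValue v i = v Finset.univ := by
  classical
  rcases isEmpty_or_nonempty F with h | h
  · simp [Finset.univ_eq_empty, h_empty]
  set N := Fintype.card F with hNdef
  have hN1 : 1 ≤ N := Fintype.card_pos
  set w : ℕ → ℝ := fun k => (k.factorial : ℝ) * ((N - k - 1).factorial : ℝ) / N.factorial with hw
  have hc : ∀ k, w k = (k.factorial : ℝ) * ((N - k - 1).factorial : ℝ) / N.factorial :=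
    fun _ => rfl
  have key : ∀ i : F, shapleyValue v i =
      ∑ S ∈ (univ : Finset F).powerset,
        ((if i ∈ S then w (S.card - 1) * v S else 0)
          - (if i ∉ S then w S.card * v S else 0)) := by
    intro i
    rw [Finset.sum_sub_distrib]
    have t1 : ∑ A ∈ (Finset.univ.erase i).powerset, w A.card * v (insert i A)
        = ∑ S ∈ (univ : Finset F).powerset,
            (if i ∈ S then w (S.card - 1) * v S else 0) := by
      rw [← Finset.sum_filter]
      refine Finset.sum_nbij' (fun A => insert i A) (fun S => S.erase i) ?_ ?_ ?_ ?_ ?_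
      · intro A hA
        simp only [mem_powerset, mem_filter] at *
        exact ⟨subset_univ _, mem_insert_self _ _⟩
      · intro S hS
        simp only [mem_powerset, mem_filter] at *
        exact erase_subset_erase _ (subset_univ _)
      · intro A hA
        simp only [mem_powerset] at hA
        have : i ∉ A := fun hi => (mem_erase.mp (hA hi)).1 rfl
        simp [Finset.erase_insert this]
      · intro S hS
        simp only [mem_powerset, mem_filter] at hS
        simp [Finset.insert_erase hS.2]
      · intro A hA
        simp only [mem_powerset] at hA
        have hi : i ∉ A := fun hi => (mem_erase.mp (hA hi)).1 rfl
        rw [Finset.card_insert_of_notMem hi]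
        simp
    have hps : (Finset.univ.erase i).powerset
        = (univ : Finset F).powerset.filter (fun A => i ∉ A) := by
      ext A
      simp [Finset.subset_erase]
    have t2 : ∑ A ∈ (Finset.univ.erase i).powerset, w A.card * v A
        = ∑ S ∈ (univ : Finset F).powerset,
            (if i ∉ S then w S.card * v S else 0) := by
      rw [hps, Finset.sum_filter]
    unfold shapleyValue
    rw [← t1, ← t2, ← Finset.sum_sub_distrib]
    apply Finset.sum_congr rfl
    intro A hA
    simp only [← hNdef]
    ring
  calc ∑ i, shapleyValue v i
      = ∑ S ∈ (univ : Finset F).powerset,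
          ((S.card : ℝ) * (w (S.card - 1) * v S)
            - ((N - S.card : ℕ) : ℝ) * (w S.card * v S)) := by
        rw [Finset.sum_congr rfl (fun i _ => key i), Finset.sum_comm]
        apply Finset.sum_congr rfl
        intro S hS
        rw [Finset.sum_sub_distrib]
        congr 1
        · rw [Finset.sum_ite_mem, Finset.univ_inter, Finset.sum_const, nsmul_eq_mul]
        · have : ∀ i : F, (if i ∉ S then w S.card * v S else 0)
              = (if i ∈ Sᶜ then w S.card * v S else 0) := by
            intro i; simp
          simp_rw [this]
          rw [Finset.sum_ite_mem, Finset.univ_inter, Finset.sum_const, nsmul_eq_mul,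
            Finset.card_compl]
    _ = v Finset.univ := by
        rw [Finset.sum_eq_single_of_mem (univ : Finset F) (Finset.mem_powerset_self _)]
        · -- the univ term equals v univ
          rw [Finset.card_univ, ← hNdef, Nat.sub_self]
          simp only [Nat.cast_zero, zero_mul, sub_zero]
          rw [hc]
          have h0 : N - (N - 1) - 1 = 0 := by omega
          rw [h0]
          simp only [Nat.factorial_zero, Nat.cast_one, mul_one]
          rw [show ((N:ℝ)) * ((((N - 1).factorial : ℕ) : ℝ)
              / N.factorial * v Finset.univ)
              = ((N : ℝ) * (((N - 1).factorial : ℕ) : ℝ))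
                / N.factorial * v Finset.univ by ring]
          rw [show ((N : ℝ) * (((N - 1).factorial : ℕ) : ℝ)) = (N.factorial : ℝ) by
            exact_mod_cast Nat.mul_factorial_pred (Nat.one_le_iff_ne_zero.mp hN1)]
          rw [div_self (by exact_mod_cast N.factorial_ne_zero), one_mul]
        · intro S hS hSne
          rcases S.eq_empty_or_nonempty with rfl | hSnon
          · simp [h_empty]
          · have hs1 : 1 ≤ S.card := Finset.card_pos.mpr hSnon
            have hsN : S.card < N := by
              have := Finset.card_lt_card (lt_of_le_of_ne (Finset.mem_powerset.mp hS)
                hSne)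
              simpa [Finset.card_univ] using this
            set s := S.card with hs
            have hcoef : (s : ℝ) * w (s - 1) = ((N - s : ℕ) : ℝ) * w s := by
              have h1 : N - (s - 1) - 1 = N - s := by omega
              have h2 : (s : ℕ) * ((s-1).factorial * (N - s).factorial)
                  = (N - s) * (s.factorial * (N - s - 1).factorial) := by
                rw [← mul_assoc, Nat.mul_factorial_pred (Nat.one_le_iff_ne_zero.mp hs1)]
                rw [show (N - s) * (s.factorial * (N - s - 1).factorial)
                    = s.factorial * ((N - s) * (N - s - 1).factorial) by ring]
                rw [Nat.mul_factorial_pred (by omega), mul_comm]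
              rw [hc, hc, h1, ← mul_div_assoc, ← mul_div_assoc]
              congr 1
              exact_mod_cast h2
            rw [show (s : ℝ) * (w (s-1) * v S) - ((N - s : ℕ):ℝ) * (w s * v S)
                = ((s : ℝ) * w (s-1) - ((N - s : ℕ):ℝ) * w s) * v S by ring, hcoef]
            ring
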